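/- Let p and d be integers with 1 ≤ p and 2p ≤ d. Then for every β = (β₁,…,β_d) ∈ ℝ^d satisfying the symmetry-wall inequalities β₁ ≤ β₂ ≤ … ≤ β_d and the electric-wall inequality β₁ + … + β_p ≥ 0, one has Σ_{i=1}^d βᵢ ≥ 0 and Q(β) ≤ 0, i.e. Σ_{i=1}^d βᵢ² ≤ (Σ_{i=1}^d βᵢ)². (In other words, the wall cone of the gravity + single proper p-form system with no dilaton is contained in the closed future light cone of the DeWitt metric; hence the corresponding billiard has finite volume.) -/

import Mathlib

/-- The wall cone of the gravity + single proper `p`-form system (no dilaton),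
`β₁ ≤ β₂ ≤ … ≤ β_d` and `β₁ + … + β_p ≥ 0` with `1 ≤ p` and `2p ≤ d`, is contained
in the closed future light cone of the DeWitt metric: `Σ βᵢ ≥ 0` and
`Σ βᵢ² ≤ (Σ βᵢ)²`. -/
theorem wall_cone_in_light_cone (p d : ℕ) (hp : 1 ≤ p) (hpd : 2 * p ≤ d)
    (β : Fin d → ℝ) (hsym : Monotone β)
    (helec : 0 ≤ ∑ i ∈ Finset.univ.filter (fun i : Fin d => i.val < p), β i) :
    0 ≤ ∑ i, β i ∧ ∑ i, (β i) ^ 2 ≤ (∑ i, β i) ^ 2 := by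
  classical
  have hpd' : p ≤ d := by omega
  have hp1 : p - 1 < d := by omega
  have hd1 : d - 1 < d := by omega
  set F := Finset.univ.filter (fun i : Fin d => i.val < p) with hF
  set G := Finset.univ.filter (fun i : Fin d => ¬ i.val < p) with hG
  set m : ℝ := β ⟨p - 1, hp1⟩ with hm_def
  set M : ℝ := β ⟨d - 1, hd1⟩ with hM_def
  set U : ℝ := ∑ i ∈ F, β i with hU_def
  set V : ℝ := ∑ i ∈ G, β i with hV_def
  have hsplit : ∑ i, β i = U + V := by
    rw [hU_def, hV_def, hF, hG, Finset.sum_filter_add_sum_filter_not]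
  have hsplit2 : ∑ i, (β i) ^ 2 = (∑ i ∈ F, (β i) ^ 2) + ∑ i ∈ G, (β i) ^ 2 := by
    rw [hF, hG, Finset.sum_filter_add_sum_filter_not]
  set c := F.card with hc_def
  set n := G.card with hn_def
  have hcard : c + n = d := by
    rw [hc_def, hn_def, hF, hG, Finset.card_filter_add_card_filter_not]
    simp
  have hcle : c ≤ p := by
    have : F.card ≤ (Finset.range p).card := by
      apply Finset.card_le_card_of_injOn (fun i => i.val)
      · intro i hi
        simp only [Finset.mem_coe, hF, Finset.mem_filter] at hi
        exact Finset.mem_range.2 hi.2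
      · exact fun a _ b _ h => Fin.val_injective h
    simpa using this
  have hc1 : 1 ≤ c := by
    have h0 : (⟨0, by omega⟩ : Fin d) ∈ F :=
      Finset.mem_filter.2 ⟨Finset.mem_univ _, by show 0 < p; omega⟩
    have := Finset.card_pos.mpr ⟨_, h0⟩
    omega
  clear_value F G m M U V c n
  have hnc : c ≤ n := by omega
  -- element bounds
  have hFle : ∀ i ∈ F, β i ≤ m := by
    intro i hi
    rw [hF, Finset.mem_filter] at hi
    rw [hm_def]
    apply hsym
    simp only [Fin.le_def]
    omega
  have hGge : ∀ i ∈ G, m ≤ β i := by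
    intro i hi
    rw [hG, Finset.mem_filter] at hi
    rw [hm_def]
    apply hsym
    simp only [Fin.le_def]
    omega
  have hMle : ∀ i : Fin d, β i ≤ M := by
    intro i
    rw [hM_def]
    apply hsym
    simp only [Fin.le_def]
    omega
  have hUm : U ≤ (c : ℝ) * m := by
    calc U = ∑ i ∈ F, β i := hU_def
    _ ≤ ∑ _i ∈ F, m := Finset.sum_le_sum hFle
    _ = (c : ℝ) * m := by rw [Finset.sum_const, nsmul_eq_mul, ← hc_def]
  have hc1R : (1 : ℝ) ≤ (c : ℝ) := by exact_mod_cast hc1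
  have hm0 : 0 ≤ m := by nlinarith
  have hVnm : (n : ℝ) * m ≤ V := by
    have h := Finset.card_nsmul_le_sum G β m hGge
    rwa [nsmul_eq_mul, ← hn_def, ← hV_def] at h
  have hV0 : 0 ≤ V := le_trans (by positivity) hVnm
  have hlastG : (⟨d - 1, hd1⟩ : Fin d) ∈ G := by
    rw [hG, Finset.mem_filter]
    refine ⟨Finset.mem_univ _, ?_⟩
    simp only
    omega
  have hn1 : 1 ≤ n := by omega
  have hVM : ((n : ℝ) - 1) * m ≤ V - M := by
    have hsum : M + ∑ i ∈ G.erase ⟨d - 1, hd1⟩, β i = V := by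
      rw [hM_def, hV_def]; exact Finset.add_sum_erase G β hlastG
    have hb : (G.erase ⟨d - 1, hd1⟩).card • m ≤ ∑ i ∈ G.erase ⟨d - 1, hd1⟩, β i :=
      Finset.card_nsmul_le_sum _ β m (fun i hi => hGge i (Finset.mem_of_mem_erase hi))
    rw [Finset.card_erase_of_mem hlastG, ← hn_def, nsmul_eq_mul] at hb
    have hcast : ((n - 1 : ℕ) : ℝ) = (n : ℝ) - 1 := by
      rw [Nat.cast_sub hn1]; norm_num
    rw [hcast] at hb
    linarith
  have hmM : m ≤ M := by
    rw [hm_def, hM_def]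
    apply hsym
    simp only [Fin.le_def]
    omega
  have hG2 : ∑ i ∈ G, (β i) ^ 2 ≤ M * V := by
    rw [hV_def, Finset.mul_sum]
    apply Finset.sum_le_sum
    intro i hi
    have h1 := hGge i hi
    have h2 := hMle i
    nlinarith
  set a : ℝ := U - ((c : ℝ) - 1) * m with ha_def
  have hFge : ∀ i ∈ F, a ≤ β i := by
    intro i hi
    have h2 : β i + ∑ j ∈ F.erase i, β j = U := by
      rw [hU_def]; exact Finset.add_sum_erase F β hi
    have h1 : ∑ j ∈ F.erase i, β j ≤ ((c : ℝ) - 1) * m := by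
      have hb : ∑ j ∈ F.erase i, β j ≤ (F.erase i).card • m :=
        Finset.sum_le_card_nsmul _ β m (fun j hj => hFle j (Finset.mem_of_mem_erase hj))
      rw [Finset.card_erase_of_mem hi, ← hc_def, nsmul_eq_mul] at hb
      have hcast : ((c - 1 : ℕ) : ℝ) = (c : ℝ) - 1 := by
        rw [Nat.cast_sub hc1]; norm_num
      rwa [hcast] at hb
    linarith
  have hF2 : ∑ i ∈ F, (β i) ^ 2 ≤ (a + m) * U - (c : ℝ) * (a * m) := by
    calc ∑ i ∈ F, (β i) ^ 2 ≤ ∑ i ∈ F, ((a + m) * β i - a * m) := by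
          apply Finset.sum_le_sum
          intro i hi
          have h1 := hFge i hi
          have h2 := hFle i hi
          nlinarith
    _ = (a + m) * U - (c : ℝ) * (a * m) := by
          rw [Finset.sum_sub_distrib, ← Finset.mul_sum, Finset.sum_const, nsmul_eq_mul,
            ← hU_def, ← hc_def]
  have hncR : (c : ℝ) ≤ (n : ℝ) := by exact_mod_cast hnc
  have hU0 : (0 : ℝ) ≤ U := helec
  have key : ((n : ℝ) * m) * (((n : ℝ) - 1) * m) ≤ V * (V - M) := by
    apply mul_le_mul hVnm hVM ?_ hV0
    have : (0:ℝ) ≤ (n : ℝ) - 1 := by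
      have : (1:ℝ) ≤ (n:ℝ) := by exact_mod_cast hn1
      linarith
    positivity
  have key2 : (c : ℝ) * ((c : ℝ) - 1) * m ^ 2 ≤ ((n : ℝ) * m) * (((n : ℝ) - 1) * m) := by
    nlinarith [mul_nonneg (mul_nonneg (sub_nonneg.2 hncR)
      (by linarith : (0:ℝ) ≤ (n : ℝ) + (c : ℝ) - 1)) (sq_nonneg m)]
  have hprod1 : 0 ≤ ((c : ℝ) - 1) * m * U := by
    apply mul_nonneg (mul_nonneg (by linarith) hm0) hU0
  have hprod2 : 0 ≤ U * V := mul_nonneg hU0 hV0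
  have hF2' : ∑ i ∈ F, (β i) ^ 2 ≤
      U ^ 2 - (2 * (c : ℝ) - 2) * m * U + (c : ℝ) * ((c : ℝ) - 1) * m ^ 2 := by
    calc ∑ i ∈ F, (β i) ^ 2 ≤ (a + m) * U - (c : ℝ) * (a * m) := hF2
    _ = U ^ 2 - (2 * (c : ℝ) - 2) * m * U + (c : ℝ) * ((c : ℝ) - 1) * m ^ 2 := by
        rw [ha_def]; ring
  constructor
  · rw [hsplit]; linarith
  · rw [hsplit2, hsplit]
    have h := add_le_add hF2' hG2
    refine le_trans h ?_
    clear * - key key2 hprod1 hprod2 hc1R hncR hm0 hU0 hV0 hmM hVnm hVM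
    nlinarith [key, key2, hprod1, hprod2]
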